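/- Let a ∈ ℝ ∪ {−∞} and let φ : (a,∞) → ℝ be smooth with φ'(t) > 0 and φ''(t) ≥ 0 for all t. Let (x, z, θ) : [0, s₋) → (0,∞) × (a,∞) × ℝ be the maximal solution of the profile-curve system x'(s) = cos θ(s), z'(s) = sin θ(s), θ'(s) = φ'(z(s))·cos θ(s) − sin θ(s)/x(s), with x(0) = x₀ > 0, z(0) = z₀ ∈ (a,∞), θ(0) = π, and let s₀ ∈ (0, s₋) be the first time with θ(s₀) = π/2. Then: (i) 0 < θ(s) < π/2 for all s ∈ (s₀, s₋); and (ii) there exists s₁ ∈ (s₀, s₋) such that θ'(s₁) = 0, θ attains its minimum over (s₀, s₋) at s₁, and θ'(s) > 0 for all s ∈ (s₁, s₋). -/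

import Mathlib

open Set Filter
open scoped ENNReal Topology

private lemma ev_right_lt {f : ℝ → ℝ} {d m : ℝ} (h : HasDerivAt f d m) (hd : d < 0) :
    ∀ᶠ t in 𝓝[>] m, f t < f m := by
  have hs := hasDerivAt_iff_tendsto_slope.mp h
  have h1 : ∀ᶠ t in 𝓝[≠] m, slope f m t < 0 := hs.eventually_lt_const hd
  have h2 : ∀ᶠ t in 𝓝[>] m, slope f m t < 0 :=
    h1.filter_mono (nhdsWithin_mono _ fun t ht => ne_of_gt ht)
  filter_upwards [h2, self_mem_nhdsWithin] with t ht ht'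
  rw [slope_def_field] at ht
  have htm : (0:ℝ) < t - m := sub_pos.2 ht'
  rcases div_neg_iff.mp ht with ⟨_, h⟩ | ⟨h, _⟩
  · linarith
  · linarith

private lemma ev_left_gt {f : ℝ → ℝ} {d m : ℝ} (h : HasDerivAt f d m) (hd : d < 0) :
    ∀ᶠ t in 𝓝[<] m, f m < f t := by
  have hs := hasDerivAt_iff_tendsto_slope.mp h
  have h1 : ∀ᶠ t in 𝓝[≠] m, slope f m t < 0 := hs.eventually_lt_const hd
  have h2 : ∀ᶠ t in 𝓝[<] m, slope f m t < 0 :=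
    h1.filter_mono (nhdsWithin_mono _ fun t ht => ne_of_lt ht)
  filter_upwards [h2, self_mem_nhdsWithin] with t ht ht'
  rw [slope_def_field] at ht
  have htm : t - m < 0 := sub_neg.2 ht'
  rcases div_neg_iff.mp ht with ⟨h, _⟩ | ⟨_, h⟩
  · linarith
  · linarith

private lemma ev_right_gt {f : ℝ → ℝ} {d m : ℝ} (h : HasDerivAt f d m) (hd : 0 < d) :
    ∀ᶠ t in 𝓝[>] m, f m < f t := by
  have := ev_right_lt h.neg (by linarith : -d < 0)
  filter_upwards [this] with t ht; simpa using ht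

private lemma ev_left_lt {f : ℝ → ℝ} {d m : ℝ} (h : HasDerivAt f d m) (hd : 0 < d) :
    ∀ᶠ t in 𝓝[<] m, f t < f m := by
  have := ev_left_gt h.neg (by linarith : -d < 0)
  filter_upwards [this] with t ht; simpa using ht

private lemma mem_of_closure' {f : ℝ → ℝ} {A : Set ℝ} {m : ℝ} {C : Set ℝ} (hC : IsClosed C)
    (hf : ContinuousAt f m) (hm : m ∈ closure A) (h : ∀ s ∈ A, f s ∈ C) : f m ∈ C :=
  (hC.closure_subset_iff.mpr (image_subset_iff.mpr h)) (mem_closure_image hf hm)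

private lemma le_of_closure {f : ℝ → ℝ} {A : Set ℝ} {m v : ℝ} (hf : ContinuousAt f m)
    (hm : m ∈ closure A) (h : ∀ s ∈ A, v ≤ f s) : v ≤ f m :=
  mem_of_closure' isClosed_Ici hf hm (fun s hs => mem_Ici.mpr (h s hs))

private lemma ge_of_closure {f : ℝ → ℝ} {A : Set ℝ} {m v : ℝ} (hf : ContinuousAt f m)
    (hm : m ∈ closure A) (h : ∀ s ∈ A, f s ≤ v) : f m ≤ v :=
  mem_of_closure' isClosed_Iic hf hm (fun s hs => mem_Iic.mpr (h s hs))

private lemma left_glue {f f' : ℝ → ℝ} {c b d F : ℝ} (hcb : c < b)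
    (hf : ∀ t ∈ Ioo c b, HasDerivAt f (f' t) t)
    (hd : Tendsto f' (𝓝[<] b) (𝓝 d))
    (hF : Tendsto f (𝓝[<] b) (𝓝 F)) :
    HasDerivWithinAt (fun t => if t < b then f t else F) d (Iio b) b := by
  set g : ℝ → ℝ := fun t => if t < b then f t else F with hg
  have hgb : g b = F := if_neg (lt_irrefl b)
  rw [hasDerivWithinAt_iff_tendsto_slope]
  have hdiff : Iio b \ {b} = Iio b := diff_singleton_eq_self (by simp)
  rw [hdiff, Metric.tendsto_nhds]
  intro ε hε
  have hε2 : 0 < ε/2 := by linarith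
  have hev : ∀ᶠ t in 𝓝[<] b, dist (f' t) d < ε/2 := (Metric.tendsto_nhds.mp hd) _ hε2
  obtain ⟨l, hl, hsub⟩ := mem_nhdsLT_iff_exists_Ioo_subset.mp hev
  set l' := max l c with hl'def
  have hl'b : l' < b := max_lt hl hcb
  have key : ∀ s ∈ Ioo l' b, dist (slope g b s) d < ε := by
    intro s hs
    have hbound : ∀ u ∈ Ioo s b, |(f u - d*u) - (f s - d*s)| ≤ ε/2 * (u - s) := by
      intro u hu
      have hder : ∀ t ∈ Icc s u, HasDerivWithinAt (fun t => f t - d*t) (f' t - d) (Icc s u) t := by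
        intro t ht
        have htm : t ∈ Ioo c b :=
          ⟨lt_of_lt_of_le (lt_of_le_of_lt (le_max_right l c) hs.1) ht.1,
            lt_of_le_of_lt ht.2 hu.2⟩
        have h1 : HasDerivAt (fun y : ℝ => f y - d*y) (f' t - d) t := by
          have h := (hf t htm).sub ((hasDerivAt_id' t).const_mul d); rw [mul_one] at h; exact h
        exact h1.hasDerivWithinAt
      have hbd : ∀ t ∈ Ico s u, ‖f' t - d‖ ≤ ε/2 := by
        intro t ht
        have htm : t ∈ Ioo l b :=
          ⟨lt_of_lt_of_le (lt_of_le_of_lt (le_max_left l c) hs.1) ht.1, ht.2.trans hu.2⟩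
        have h3 : dist (f' t) d < ε/2 := hsub htm
        rw [Real.dist_eq] at h3
        rw [Real.norm_eq_abs]
        exact h3.le
      have := norm_image_sub_le_of_norm_deriv_le_segment' hder hbd u (right_mem_Icc.mpr hu.1.le)
      simpa [Real.norm_eq_abs] using this
    have lim1 : Tendsto (fun u => |(f u - d*u) - (f s - d*s)|) (𝓝[<] b)
        (𝓝 (|(F - d*b) - (f s - d*s)|)) := by
      apply Tendsto.abs
      exact (hF.sub (((continuous_const.mul continuous_id).tendsto b).mono_left
        nhdsWithin_le_nhds)).sub tendsto_const_nhds
    have lim2 : Tendsto (fun u : ℝ => ε/2 * (u - s)) (𝓝[<] b) (𝓝 (ε/2 * (b - s))) :=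
      ((continuous_const.mul (continuous_id.sub continuous_const)).tendsto b).mono_left
        nhdsWithin_le_nhds
    have hle : |(F - d*b) - (f s - d*s)| ≤ ε/2 * (b - s) := by
      refine le_of_tendsto_of_tendsto lim1 lim2 ?_
      filter_upwards [Ioo_mem_nhdsLT_of_mem (⟨hs.2, le_rfl⟩ : b ∈ Ioc s b)] with u hu
      exact hbound u hu
    have hgs : g s = f s := if_pos hs.2
    rw [Real.dist_eq, slope_def_field, hgs, hgb]
    have hne : s - b ≠ 0 := ne_of_lt (sub_neg.2 hs.2)
    have hbs : b - s ≠ 0 := ne_of_gt (by linarith [hs.2])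
    have heq : (f s - F)/(s - b) - d = ((F - d*b) - (f s - d*s)) / (b - s) := by
      rw [div_sub' hne, eq_div_iff hbs, div_mul_eq_mul_div, div_eq_iff hne]
      ring
    rw [heq, abs_div, abs_of_pos (by linarith [hs.2] : (0:ℝ) < b - s)]
    have h2 : |(F - d*b) - (f s - d*s)| / (b - s) ≤ ε/2 :=
      (div_le_iff₀ (by linarith [hs.2])).mpr (by linarith [hle])
    linarith
  filter_upwards [Ioo_mem_nhdsLT_of_mem (⟨hl'b, le_rfl⟩ : b ∈ Ioc l' b)] with s hs
  exact key s hs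

def Dom (ω : ℝ≥0∞) : Set ℝ := {s : ℝ | 0 ≤ s ∧ ENNReal.ofReal s < ω}

set_option maxHeartbeats 1000000 in
theorem stmt_13 (a : EReal) (φ φ' φ'' : ℝ → ℝ)
    (hφsm : ContDiffOn ℝ (⊤ : ℕ∞) φ {t : ℝ | a < (t : EReal)})
    (hφd : ∀ t : ℝ, a < (t : EReal) → HasDerivAt φ (φ' t) t)
    (hφd2 : ∀ t : ℝ, a < (t : EReal) → HasDerivAt φ' (φ'' t) t)
    (hφ'pos : ∀ t : ℝ, a < (t : EReal) → 0 < φ' t)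
    (hφ''nn : ∀ t : ℝ, a < (t : EReal) → 0 ≤ φ'' t)
    (x₀ z₀ : ℝ) (hx₀ : 0 < x₀) (hz₀ : a < (z₀ : EReal))
    (sm : ℝ≥0∞) (hsm : 0 < sm)
    (x z θ : ℝ → ℝ)
    (hx0 : x 0 = x₀) (hz0 : z 0 = z₀) (hθ0 : θ 0 = Real.pi)
    (hxpos : ∀ s ∈ Dom sm, 0 < x s)
    (hzmem : ∀ s ∈ Dom sm, a < (z s : EReal))
    (hdx : ∀ s ∈ Dom sm, HasDerivWithinAt x (Real.cos (θ s)) (Dom sm) s)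
    (hdz : ∀ s ∈ Dom sm, HasDerivWithinAt z (Real.sin (θ s)) (Dom sm) s)
    (hdθ : ∀ s ∈ Dom sm, HasDerivWithinAt θ
      (φ' (z s) * Real.cos (θ s) - Real.sin (θ s) / x s) (Dom sm) s)
    -- maximality: no solution with the same initial data on a larger interval
    (hmax : ∀ sm' : ℝ≥0∞, sm < sm' →
      ¬ ∃ x' z' θ' : ℝ → ℝ,
        x' 0 = x₀ ∧ z' 0 = z₀ ∧ θ' 0 = Real.pi ∧
        (∀ s ∈ Dom sm', 0 < x' s) ∧
        (∀ s ∈ Dom sm', a < (z' s : EReal)) ∧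
        (∀ s ∈ Dom sm', HasDerivWithinAt x' (Real.cos (θ' s)) (Dom sm') s) ∧
        (∀ s ∈ Dom sm', HasDerivWithinAt z' (Real.sin (θ' s)) (Dom sm') s) ∧
        (∀ s ∈ Dom sm', HasDerivWithinAt θ'
          (φ' (z' s) * Real.cos (θ' s) - Real.sin (θ' s) / x' s) (Dom sm') s))
    -- `s₀` is the first time at which `θ = π/2`
    (s₀ : ℝ) (hs₀pos : 0 < s₀) (hs₀mem : ENNReal.ofReal s₀ < sm)
    (hs₀ : θ s₀ = Real.pi / 2)
    (hfirst : ∀ s : ℝ, 0 < s → s < s₀ → θ s ≠ Real.pi / 2) :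
    -- (i)
    (∀ s : ℝ, s₀ < s → s ∈ Dom sm → 0 < θ s ∧ θ s < Real.pi / 2) ∧
    -- (ii)
    (∃ s₁ : ℝ, s₀ < s₁ ∧ s₁ ∈ Dom sm ∧
      φ' (z s₁) * Real.cos (θ s₁) - Real.sin (θ s₁) / x s₁ = 0 ∧
      (∀ s : ℝ, s₀ < s → s ∈ Dom sm → θ s₁ ≤ θ s) ∧
      (∀ s : ℝ, s₁ < s → s ∈ Dom sm →
        0 < φ' (z s) * Real.cos (θ s) - Real.sin (θ s) / x s)) := by
  classical
  have hdomsub : ∀ {u v : ℝ}, v ∈ Dom sm → 0 ≤ u → u ≤ v → u ∈ Dom sm := by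
    intro u v hv hu huv
    exact ⟨hu, lt_of_le_of_lt (ENNReal.ofReal_le_ofReal huv) hv.2⟩
  have hnbhd : ∀ s : ℝ, 0 < s → s ∈ Dom sm → Dom sm ∈ 𝓝 s := by
    intro s hs hsd
    by_cases htop : sm = ⊤
    · subst htop
      refine Filter.mem_of_superset (Ioi_mem_nhds hs) ?_
      intro t ht
      exact ⟨le_of_lt ht, by simp⟩
    · have hb : s < sm.toReal := (ENNReal.ofReal_lt_iff_lt_toReal hsd.1 htop).mp hsd.2
      refine Filter.mem_of_superset (Ioo_mem_nhds hs hb) ?_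
      intro t ht
      exact ⟨ht.1.le, (ENNReal.ofReal_lt_iff_lt_toReal ht.1.le htop).mpr ht.2⟩
  have hs₀dom : s₀ ∈ Dom sm := ⟨hs₀pos.le, hs₀mem⟩
  set g : ℝ → ℝ := fun s => φ' (z s) * Real.cos (θ s) - Real.sin (θ s) / x s with hgdef
  have hθAt : ∀ s, 0 < s → s ∈ Dom sm → HasDerivAt θ (g s) s := fun s hs hsd =>
    (hdθ s hsd).hasDerivAt (hnbhd s hs hsd)
  have hxAt : ∀ s, 0 < s → s ∈ Dom sm → HasDerivAt x (Real.cos (θ s)) s := fun s hs hsd =>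
    (hdx s hsd).hasDerivAt (hnbhd s hs hsd)
  have hzAt : ∀ s, 0 < s → s ∈ Dom sm → HasDerivAt z (Real.sin (θ s)) s := fun s hs hsd =>
    (hdz s hsd).hasDerivAt (hnbhd s hs hsd)
  have hθc : ∀ s, 0 < s → s ∈ Dom sm → ContinuousAt θ s := fun s hs hsd =>
    (hθAt s hs hsd).continuousAt
  have hgAt : ∀ s, 0 < s → s ∈ Dom sm → HasDerivAt g
      ((φ'' (z s) * Real.sin (θ s)) * Real.cos (θ s) + φ' (z s) * (-Real.sin (θ s) * g s)
        - ((Real.cos (θ s) * g s) * x s - Real.sin (θ s) * Real.cos (θ s)) / (x s)^2) s := by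
    intro s hs hsd
    have hθ' := hθAt s hs hsd
    have h1 : HasDerivAt (fun t => φ' (z t)) (φ'' (z s) * Real.sin (θ s)) s :=
      (hφd2 (z s) (hzmem s hsd)).comp s (hzAt s hs hsd)
    have h2 : HasDerivAt (fun t => Real.cos (θ t)) (-Real.sin (θ s) * g s) s :=
      (Real.hasDerivAt_cos (θ s)).comp s hθ'
    have h3 : HasDerivAt (fun t => Real.sin (θ t)) (Real.cos (θ s) * g s) s :=
      (Real.hasDerivAt_sin (θ s)).comp s hθ'
    exact (h1.mul h2).sub (h3.div (hxAt s hs hsd) (ne_of_gt (hxpos s hsd)))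
  have hgc : ∀ s, 0 < s → s ∈ Dom sm → ContinuousAt g s := fun s hs hsd =>
    (hgAt s hs hsd).continuousAt
  have hInfFacts : ∀ (A : Set ℝ) (c : ℝ), c ∈ Dom sm → (∀ s ∈ A, c < s) → (∀ s ∈ A, s ∈ Dom sm) →
      A.Nonempty → (c ≤ sInf A ∧ sInf A ∈ Dom sm ∧ sInf A ∈ closure A ∧
        (∀ t, t < sInf A → t ∉ A) ∧ ∀ s ∈ A, sInf A ≤ s) := by
    intro A c hc hcl hAD hAne
    obtain ⟨w, hw⟩ := hAne
    have hbdd : BddBelow A := ⟨c, fun s hs => (hcl s hs).le⟩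
    have h1 : c ≤ sInf A := le_csInf ⟨w, hw⟩ fun s hs => (hcl s hs).le
    have h2 : sInf A ∈ Dom sm := hdomsub (hAD w hw) (hc.1.trans h1) (csInf_le hbdd hw)
    exact ⟨h1, h2, csInf_mem_closure ⟨w, hw⟩ hbdd,
      fun t htm hmem => absurd (csInf_le hbdd hmem) (not_le.mpr htm),
      fun s hs => csInf_le hbdd hs⟩
  -- Part (i) (a): θ < π/2 after s₀
  have Pa : ∀ s, s₀ < s → s ∈ Dom sm → θ s < Real.pi / 2 := by
    by_contra hcon
    push_neg at hcon
    obtain ⟨w, hw1, hw2, hw3⟩ := hcon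
    set A : Set ℝ := {s | s₀ < s ∧ s ∈ Dom sm ∧ Real.pi/2 ≤ θ s} with hA
    have hAne : A.Nonempty := ⟨w, hw1, hw2, hw3⟩
    obtain ⟨hm1, hm2, hm3, hm4, hm5⟩ :=
      hInfFacts A s₀ hs₀dom (fun s hs => hs.1) (fun s hs => hs.2.1) hAne
    set m := sInf A with hmdef
    have hm0 : 0 < m := lt_of_lt_of_le hs₀pos hm1
    have hmc : ContinuousAt θ m := hθc m hm0 hm2
    have hθm_ge : Real.pi/2 ≤ θ m := le_of_closure hmc hm3 (fun s hs => hs.2.2)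
    have hθm : θ m = Real.pi/2 := by
      rcases eq_or_lt_of_le hm1 with he | hlt
      · rw [← he]; exact hs₀
      · have hcl2 : m ∈ closure (Ioo s₀ m) := by
          rw [closure_Ioo (ne_of_lt hlt)]; exact ⟨hlt.le, le_rfl⟩
        have hle : θ m ≤ Real.pi/2 := by
          refine ge_of_closure hmc hcl2 ?_
          intro t ht
          by_contra hnot
          exact hm4 t ht.2 ⟨ht.1, hdomsub hm2 (lt_trans hs₀pos ht.1).le ht.2.le,
            (not_le.mp hnot).le⟩
        linarith
    have hgm : g m < 0 := by
      have hx := hxpos m hm2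
      show φ' (z m) * Real.cos (θ m) - Real.sin (θ m) / x m < 0
      rw [hθm, Real.cos_pi_div_two, Real.sin_pi_div_two, mul_zero, zero_sub, neg_lt, neg_zero]
      positivity
    have hder := hθAt m hm0 hm2
    by_cases hmA : m ∈ A
    · have hlt : s₀ < m := hmA.1
      have hev := ev_left_gt hder hgm
      obtain ⟨t, ht1, ht2⟩ :=
        (hev.and (Filter.eventually_of_mem (Ioo_mem_nhdsLT_of_mem (⟨hlt, le_rfl⟩ : m ∈ Ioc s₀ m)) (fun y hy => hy))).exists
      exact hm4 t ht2.2 ⟨ht2.1, hdomsub hm2 (lt_trans hs₀pos ht2.1).le ht2.2.le,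
        by rw [← hθm]; exact ht1.le⟩
    · have hev := ev_right_lt hder hgm
      obtain ⟨u, hu, hsub2⟩ := mem_nhdsGT_iff_exists_Ioo_subset.mp hev
      obtain ⟨t, htA, htu⟩ := exists_lt_of_csInf_lt hAne hu
      have hmt : m < t := lt_of_le_of_ne (hm5 t htA) (fun h => hmA (h ▸ htA))
      have := hsub2 ⟨hmt, htu⟩
      rw [hθm] at this
      exact absurd htA.2.2 (not_le.mpr this)
  -- Part (i) (b): θ > 0 after s₀
  have Pb : ∀ s, s₀ < s → s ∈ Dom sm → 0 < θ s := by
    by_contra hcon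
    push_neg at hcon
    obtain ⟨w, hw1, hw2, hw3⟩ := hcon
    set A : Set ℝ := {s | s₀ < s ∧ s ∈ Dom sm ∧ θ s ≤ 0} with hA
    have hAne : A.Nonempty := ⟨w, hw1, hw2, hw3⟩
    obtain ⟨hm1, hm2, hm3, hm4, hm5⟩ :=
      hInfFacts A s₀ hs₀dom (fun s hs => hs.1) (fun s hs => hs.2.1) hAne
    set m := sInf A with hmdef
    have hm0 : 0 < m := lt_of_lt_of_le hs₀pos hm1
    rcases eq_or_lt_of_le hm1 with he | hlt
    · -- m = s₀: contradiction by continuity of θ at s₀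
      have hev : ∀ᶠ t in 𝓝 s₀, 0 < θ t :=
        (hθc s₀ hs₀pos hs₀dom).eventually_const_lt (by rw [hs₀]; positivity)
      have hev2 : ∀ᶠ t in 𝓝[>] s₀, 0 < θ t := hev.filter_mono nhdsWithin_le_nhds
      obtain ⟨u, hu, hsub2⟩ := mem_nhdsGT_iff_exists_Ioo_subset.mp hev2
      obtain ⟨t, htA, htu⟩ := exists_lt_of_csInf_lt hAne (he ▸ hu)
      have hst : s₀ < t := htA.1
      have := hsub2 ⟨hst, htu⟩
      exact absurd htA.2.2 (not_le.mpr this)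
    · have hmc : ContinuousAt θ m := hθc m hm0 hm2
      have hθm_le : θ m ≤ 0 := ge_of_closure hmc hm3 (fun s hs => hs.2.2)
      have hcl2 : m ∈ closure (Ioo s₀ m) := by
        rw [closure_Ioo (ne_of_lt hlt)]; exact ⟨hlt.le, le_rfl⟩
      have hθm_ge : 0 ≤ θ m := by
        refine le_of_closure hmc hcl2 ?_
        intro t ht
        by_contra hnot
        exact hm4 t ht.2 ⟨ht.1, hdomsub hm2 (lt_trans hs₀pos ht.1).le ht.2.le,
          (not_le.mp hnot).le⟩
      have hθm : θ m = 0 := le_antisymm hθm_le hθm_ge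
      have hgm : 0 < g m := by
        show 0 < φ' (z m) * Real.cos (θ m) - Real.sin (θ m) / x m
        rw [hθm, Real.cos_zero, Real.sin_zero, mul_one, zero_div, sub_zero]
        exact hφ'pos (z m) (hzmem m hm2)
      have hev := ev_left_lt (hθAt m hm0 hm2) hgm
      obtain ⟨t, ht1, ht2⟩ :=
        (hev.and (Filter.eventually_of_mem (Ioo_mem_nhdsLT_of_mem (⟨hlt, le_rfl⟩ : m ∈ Ioc s₀ m)) (fun y hy => hy))).exists
      rw [hθm] at ht1
      refine hm4 t ht2.2 ⟨ht2.1, hdomsub hm2 (lt_trans hs₀pos ht2.1).le ht2.2.le, ht1.le⟩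
  -- derivative of g is positive at interior zeros of g
  have hDpos : ∀ s, s₀ < s → s ∈ Dom sm → g s = 0 →
      0 < (φ'' (z s) * Real.sin (θ s)) * Real.cos (θ s) + φ' (z s) * (-Real.sin (θ s) * g s)
        - ((Real.cos (θ s) * g s) * x s - Real.sin (θ s) * Real.cos (θ s)) / (x s)^2 := by
    intro s h1 h2 h0
    have hθ1 := Pb s h1 h2
    have hθ2 := Pa s h1 h2
    have hsin : 0 < Real.sin (θ s) :=
      Real.sin_pos_of_pos_of_lt_pi hθ1 (by linarith [Real.pi_pos])
    have hcos : 0 < Real.cos (θ s) :=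
      Real.cos_pos_of_mem_Ioo ⟨by linarith [Real.pi_div_two_pos], hθ2⟩
    have hx := hxpos s h2
    have hφ'' := hφ''nn (z s) (hzmem s h2)
    have hq : 0 < Real.sin (θ s) * Real.cos (θ s) / (x s)^2 := by positivity
    have heq : (φ'' (z s) * Real.sin (θ s)) * Real.cos (θ s) + φ' (z s) * (-Real.sin (θ s) * g s)
        - ((Real.cos (θ s) * g s) * x s - Real.sin (θ s) * Real.cos (θ s)) / (x s)^2
        = φ'' (z s) * Real.sin (θ s) * Real.cos (θ s)
          + (Real.sin (θ s) * Real.cos (θ s)) / (x s)^2 := by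
      rw [h0]; ring
    rw [heq]
    exact add_pos_of_nonneg_of_pos (mul_nonneg (mul_nonneg hφ'' hsin.le) hcos.le) hq
  have hgs₀ : g s₀ < 0 := by
    have hx := hxpos s₀ hs₀dom
    show φ' (z s₀) * Real.cos (θ s₀) - Real.sin (θ s₀) / x s₀ < 0
    rw [hs₀, Real.cos_pi_div_two, Real.sin_pi_div_two, mul_zero, zero_sub, neg_lt, neg_zero]
    positivity
  -- the set where g ≥ 0
  set B : Set ℝ := {s | s₀ < s ∧ s ∈ Dom sm ∧ 0 ≤ g s} with hBdef
  have hφ'mon : ∀ u v : ℝ, a < (u : EReal) → u ≤ v → φ' u ≤ φ' v := by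
    intro u v hu huv
    have hSopen : IsOpen {t : ℝ | a < (t : EReal)} :=
      isOpen_lt continuous_const continuous_coe_real_ereal
    have hOC : Set.OrdConnected {t : ℝ | a < (t : EReal)} := by
      constructor
      intro p hp q _ t ht
      have h2 : (p : EReal) ≤ (t : EReal) := EReal.coe_le_coe_iff.mpr ht.1
      exact lt_of_lt_of_le hp h2
    have hScon : Convex ℝ {t : ℝ | a < (t : EReal)} :=
      (convex_iff_ordConnected (𝕜 := ℝ)).mpr hOC
    have hmono : MonotoneOn φ' {t : ℝ | a < (t : EReal)} := by
      apply monotoneOn_of_deriv_nonneg hScon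
      · exact fun t ht => (hφd2 t ht).continuousAt.continuousWithinAt
      · intro t ht
        rw [hSopen.interior_eq] at ht
        exact (hφd2 t ht).differentiableAt.differentiableWithinAt
      · intro t ht
        rw [hSopen.interior_eq] at ht
        rw [(hφd2 t ht).deriv]
        exact hφ''nn t ht
    exact hmono hu (lt_of_lt_of_le hu (by exact_mod_cast huv)) huv
  have monoHelp : ∀ (f f' : ℝ → ℝ), (∀ t, 0 < t → t ∈ Dom sm → HasDerivAt f (f' t) t) →
      ∀ u v, 0 < u → u ≤ v → v ∈ Dom sm → (∀ t, u < t → t < v → 0 ≤ f' t) → f u ≤ f v := by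
    intro f f' hf u v hu huv hv hnn
    have hmem : ∀ t ∈ Icc u v, 0 < t ∧ t ∈ Dom sm := fun t ht =>
      ⟨lt_of_lt_of_le hu ht.1, hdomsub hv (hu.le.trans ht.1) ht.2⟩
    have hm : MonotoneOn f (Icc u v) := by
      apply monotoneOn_of_deriv_nonneg (convex_Icc _ _)
      · intro t ht
        exact ((hf t (hmem t ht).1 (hmem t ht).2).continuousAt).continuousWithinAt
      · intro t ht
        rw [interior_Icc] at ht
        have h' := hmem t (Ioo_subset_Icc_self ht)
        exact (hf t h'.1 h'.2).differentiableAt.differentiableWithinAt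
      · intro t ht
        rw [interior_Icc] at ht
        have h' := hmem t (Ioo_subset_Icc_self ht)
        rw [(hf t h'.1 h'.2).deriv]
        exact hnn t ht.1 ht.2
    exact hm ⟨le_rfl, huv⟩ ⟨huv, le_rfl⟩ huv
  have hBne : B.Nonempty := by
    by_contra hBe
    have H : ∀ s, s₀ < s → s ∈ Dom sm → g s < 0 := by
      intro s h1 h2
      by_contra h3
      exact hBe ⟨s, h1, h2, not_lt.mp h3⟩
    -- θ is nonincreasing after s₀
    have hθanti : ∀ u v, s₀ ≤ u → u ≤ v → v ∈ Dom sm → θ v ≤ θ u := by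
      intro u v hu huv hv
      have hneg := monoHelp (fun t => -θ t) (fun t => -g t)
        (fun t h1 h2 => (hθAt t h1 h2).neg) u v (lt_of_lt_of_le hs₀pos hu) huv hv
        (fun t h1 h2 => by
          have hu0 : 0 < u := lt_of_lt_of_le hs₀pos hu
          have := H t (lt_of_le_of_lt hu h1) (hdomsub hv (by linarith) h2.le)
          show (0:ℝ) ≤ -g t
          linarith)
      simpa using hneg
    by_cases htop : sm = ⊤
    · -- Case sm = ∞ : the derivative eventually becomes positive
      subst htop
      have hdomall : ∀ s : ℝ, 0 ≤ s → s ∈ Dom ⊤ := fun s hs => ⟨hs, by simp⟩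
      set s' := s₀ + 1 with hs'def
      have hs'gt : s₀ < s' := by simp [hs'def]
      have hs'pos : 0 < s' := by linarith
      have hs'dom : s' ∈ Dom ⊤ := hdomall _ hs'pos.le
      have hθ'lt := Pa s' hs'gt hs'dom
      have hθ'0 := Pb s' hs'gt hs'dom
      have hc : 0 < Real.cos (θ s') :=
        Real.cos_pos_of_mem_Ioo ⟨by linarith [Real.pi_div_two_pos], hθ'lt⟩
      have hp : 0 < φ' (z s') := hφ'pos _ (hzmem s' hs'dom)
      set c := Real.cos (θ s') with hcdef
      set p := φ' (z s') with hpdef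
      set s := s' + (1 / (p * c) + 1) / c with hsdef
      have hstep : 0 < (1 / (p * c) + 1) / c := by positivity
      have hss' : s' < s := by rw [hsdef]; linarith
      have hspos : 0 < s := by linarith
      have hsdom : s ∈ Dom ⊤ := hdomall _ hspos.le
      have hs₀s : s₀ < s := by linarith
      -- θ s ≤ θ s' hence cos θ s ≥ c
      have hθle : θ s ≤ θ s' := hθanti s' s hs'gt.le hss'.le hsdom
      have hcos_ge : c ≤ Real.cos (θ s) := by
        rw [hcdef]
        apply Real.cos_le_cos_of_nonneg_of_le_pi (Pb s hs₀s hsdom).le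
          (by linarith [Real.pi_div_two_pos, hθ'lt]) hθle
      -- z grows hence φ'(z s) ≥ p
      have hzle : z s' ≤ z s := by
        apply monoHelp z (fun t => Real.sin (θ t)) hzAt s' s hs'pos hss'.le hsdom
        intro t h1 h2
        have ht0 : 0 < t := lt_trans hs'pos h1
        have htdom : t ∈ Dom ⊤ := hdomall _ ht0.le
        have hts₀ : s₀ < t := lt_trans hs'gt h1
        exact (Real.sin_pos_of_pos_of_lt_pi (Pb t hts₀ htdom)
          (by linarith [Real.pi_div_two_pos, Pa t hts₀ htdom])).le
      have hφ'le : p ≤ φ' (z s) := hφ'mon _ _ (hzmem s' hs'dom) hzle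
      -- x grows linearly
      have hxge : c * (s - s') ≤ x s - x s' := by
        have hmono := monoHelp (fun t => x t - c * t) (fun t => Real.cos (θ t) - c)
          (fun t h1 h2 => by have h := (hxAt t h1 h2).sub ((hasDerivAt_id' t).const_mul c); rw [mul_one] at h; exact h)
          s' s hs'pos hss'.le hsdom ?_
        · have hmono' : x s' - c * s' ≤ x s - c * s := hmono
          have hring : c * (s - s') = c * s - c * s' := by ring
          linarith
        · intro t h1 h2
          have ht0 : 0 < t := lt_trans hs'pos h1
          have htdom : t ∈ Dom ⊤ := hdomall _ ht0.le
          have hts₀ : s₀ < t := lt_trans hs'gt h1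
          have hθt : θ t ≤ θ s' := hθanti s' t hs'gt.le h1.le htdom
          have hct : c ≤ Real.cos (θ t) := by
            rw [hcdef]
            exact Real.cos_le_cos_of_nonneg_of_le_pi (Pb t hts₀ htdom).le
              (by linarith [Real.pi_div_two_pos, hθ'lt]) hθt
          show (0:ℝ) ≤ Real.cos (θ t) - c
          linarith
      have hxbig : 1 / (p * c) < x s := by
        have hcne : c ≠ 0 := ne_of_gt hc
        have hcs : c * (s - s') = 1 / (p * c) + 1 := by
          rw [hsdef]
          field_simp
          ring
        have h5 : 1 / (p * c) + 1 ≤ x s - x s' := by rw [← hcs]; exact hxge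
        linarith [hxpos s' hs'dom]
      -- conclude g s > 0
      have hxspos := hxpos s hsdom
      have hpc : 0 < p * c := mul_pos hp hc
      have h1 : Real.sin (θ s) / x s ≤ 1 / x s :=
        (div_le_div_iff_of_pos_right hxspos).mpr (Real.sin_le_one _)
      have h2 : 1 / x s < p * c := by
        rw [div_lt_iff₀ hxspos]
        have := (div_lt_iff₀ hpc).mp hxbig
        nlinarith
      have h3 : p * c ≤ φ' (z s) * Real.cos (θ s) :=
        mul_le_mul hφ'le hcos_ge hc.le (hφ'pos _ (hzmem s hsdom)).le
      have hgpos : 0 < g s := by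
        show 0 < φ' (z s) * Real.cos (θ s) - Real.sin (θ s) / x s
        linarith
      exact absurd (H s hs₀s hsdom) (not_lt.mpr hgpos.le)
    · -- Case sm < ∞ : extend the solution beyond b = sm.toReal, contradicting maximality
      set b := sm.toReal with hbdef
      have hs₀b : s₀ < b := (ENNReal.ofReal_lt_iff_lt_toReal hs₀pos.le htop).mp hs₀mem
      have hbpos : 0 < b := lt_trans hs₀pos hs₀b
      have hDom : Dom sm = Ico 0 b := by
        ext t
        constructor
        · intro ht; exact ⟨ht.1, (ENNReal.ofReal_lt_iff_lt_toReal ht.1 htop).mp ht.2⟩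
        · intro ht; exact ⟨ht.1, (ENNReal.ofReal_lt_iff_lt_toReal ht.1 htop).mpr ht.2⟩
      set s' := (s₀ + b)/2 with hs'def
      have hs's₀ : s₀ < s' := by rw [hs'def]; linarith
      have hs'b : s' < b := by rw [hs'def]; linarith
      have hs'pos : 0 < s' := lt_trans hs₀pos hs's₀
      have hs'dom : s' ∈ Dom sm := by rw [hDom]; exact ⟨hs'pos.le, hs'b⟩
      have hIoodom : ∀ t, t ∈ Ioo s' b → (0 < t ∧ s₀ < t ∧ t ∈ Dom sm) := by
        intro t ht
        refine ⟨lt_trans hs'pos ht.1, lt_trans hs's₀ ht.1, ?_⟩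
        rw [hDom]; exact ⟨(lt_trans hs'pos ht.1).le, ht.2⟩
      have hne : (Ioo s' b).Nonempty := nonempty_Ioo.mpr hs'b
      have hcosnn : ∀ t, t ∈ Ioo s' b → 0 < Real.cos (θ t) := by
        intro t ht
        have h := hIoodom t ht
        exact Real.cos_pos_of_mem_Ioo ⟨by linarith [Real.pi_div_two_pos, Pb t h.2.1 h.2.2],
          Pa t h.2.1 h.2.2⟩
      have hsinnn : ∀ t, t ∈ Ioo s' b → 0 < Real.sin (θ t) := by
        intro t ht
        have h := hIoodom t ht
        exact Real.sin_pos_of_pos_of_lt_pi (Pb t h.2.1 h.2.2)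
          (by linarith [Real.pi_div_two_pos, Pa t h.2.1 h.2.2])
      have hxmono : MonotoneOn x (Ioo s' b) := by
        intro u hu v hv huv
        apply monoHelp x (fun t => Real.cos (θ t)) hxAt u v (hIoodom u hu).1 huv (hIoodom v hv).2.2
        intro t h1 h2
        exact (hcosnn t ⟨lt_trans hu.1 h1, lt_trans h2 hv.2⟩).le
      have hzmono : MonotoneOn z (Ioo s' b) := by
        intro u hu v hv huv
        apply monoHelp z (fun t => Real.sin (θ t)) hzAt u v (hIoodom u hu).1 huv (hIoodom v hv).2.2
        intro t h1 h2
        exact (hsinnn t ⟨lt_trans hu.1 h1, lt_trans h2 hv.2⟩).le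
      have hθanti2 : AntitoneOn θ (Ioo s' b) := fun u hu v hv huv =>
        hθanti u v (lt_trans hs's₀ hu.1).le huv (hIoodom v hv).2.2
      have hxub : ∀ t ∈ Ioo s' b, x t ≤ x s' + (b - s') := by
        intro t ht
        have h6 := monoHelp (fun u => u - x u) (fun u => 1 - Real.cos (θ u))
          (fun u h1 h2 => by exact (hasDerivAt_id' u).sub (hxAt u h1 h2))
          s' t hs'pos ht.1.le (hIoodom t ht).2.2
          (fun u _ _ => by
            show (0:ℝ) ≤ 1 - Real.cos (θ u)
            linarith [Real.cos_le_one (θ u)])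
        have h7 : s' - x s' ≤ t - x t := h6
        linarith [ht.2]
      have hzub : ∀ t ∈ Ioo s' b, z t ≤ z s' + (b - s') := by
        intro t ht
        have h6 := monoHelp (fun u => u - z u) (fun u => 1 - Real.sin (θ u))
          (fun u h1 h2 => by exact (hasDerivAt_id' u).sub (hzAt u h1 h2))
          s' t hs'pos ht.1.le (hIoodom t ht).2.2
          (fun u _ _ => by
            show (0:ℝ) ≤ 1 - Real.sin (θ u)
            linarith [Real.sin_le_one (θ u)])
        have h7 : s' - z s' ≤ t - z t := h6
        linarith [ht.2]
      have hxbdd : BddAbove (x '' Ioo s' b) :=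
        ⟨x s' + (b - s'), by rintro _ ⟨t, ht, rfl⟩; exact hxub t ht⟩
      have hzbdd : BddAbove (z '' Ioo s' b) :=
        ⟨z s' + (b - s'), by rintro _ ⟨t, ht, rfl⟩; exact hzub t ht⟩
      have hθbdd : BddBelow (θ '' Ioo s' b) :=
        ⟨0, by rintro _ ⟨t, ht, rfl⟩; exact (Pb t (hIoodom t ht).2.1 (hIoodom t ht).2.2).le⟩
      set X := sSup (x '' Ioo s' b) with hXdef
      set Z := sSup (z '' Ioo s' b) with hZdef
      set Θ := sInf (θ '' Ioo s' b) with hΘdef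
      have hxlim : Tendsto x (𝓝[<] b) (𝓝 X) :=
        hxmono.tendsto_nhdsWithin_Ioo_left hne hxbdd
      have hzlim : Tendsto z (𝓝[<] b) (𝓝 Z) :=
        hzmono.tendsto_nhdsWithin_Ioo_left hne hzbdd
      have hθlim : Tendsto θ (𝓝[<] b) (𝓝 Θ) :=
        hθanti2.tendsto_nhdsWithin_Ioo_left hne hθbdd
      obtain ⟨s'', hs''⟩ := hne
      have hs''a := hIoodom s'' hs''
      have hXpos : 0 < X :=
        lt_of_lt_of_le (hxpos s'' hs''a.2.2) (le_csSup hxbdd ⟨s'', hs'', rfl⟩)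
      have hZgt : a < (Z : EReal) :=
        lt_of_lt_of_le (hzmem s'' hs''a.2.2)
          (EReal.coe_le_coe_iff.mpr (le_csSup hzbdd ⟨s'', hs'', rfl⟩))
      have hφ'cont : ContinuousAt φ' Z := (hφd2 Z hZgt).continuousAt
      have hcoslim : Tendsto (fun t => Real.cos (θ t)) (𝓝[<] b) (𝓝 (Real.cos Θ)) :=
        (Real.continuous_cos.continuousAt.tendsto).comp hθlim
      have hsinlim : Tendsto (fun t => Real.sin (θ t)) (𝓝[<] b) (𝓝 (Real.sin Θ)) :=
        (Real.continuous_sin.continuousAt.tendsto).comp hθlim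
      have hglim : Tendsto g (𝓝[<] b) (𝓝 (φ' Z * Real.cos Θ - Real.sin Θ / X)) :=
        ((hφ'cont.tendsto.comp hzlim).mul hcoslim).sub (hsinlim.div hxlim (ne_of_gt hXpos))
      -- the vector field and a local solution through (X, Z, Θ) at time b
      set V : ℝ × ℝ × ℝ → ℝ × ℝ × ℝ := fun w =>
        (Real.cos w.2.2, Real.sin w.2.2,
          φ' w.2.1 * Real.cos w.2.2 - Real.sin w.2.2 / w.1) with hVdef
      have hSopen : IsOpen {t : ℝ | a < (t : EReal)} :=
        isOpen_lt continuous_const continuous_coe_real_ereal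
      have hφ'cd : ContDiffAt ℝ 1 φ' Z := by
        have hderiv : ContDiffOn ℝ (⊤ : ℕ∞) (deriv φ) {t : ℝ | a < (t : EReal)} :=
          ((contDiffOn_infty_iff_deriv_of_isOpen hSopen).mp hφsm).2
        have hEq : φ' =ᶠ[𝓝 Z] deriv φ := by
          filter_upwards [hSopen.mem_nhds hZgt] with t ht
          exact ((hφd t ht).deriv).symm
        exact ((hderiv.contDiffAt (hSopen.mem_nhds hZgt)).of_le (by exact_mod_cast le_top)).congr_of_eventuallyEq hEq
      have hVcd : ContDiffAt ℝ 1 V (X, Z, Θ) := by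
        have hc1 : ContDiffAt ℝ 1 (fun w : ℝ × ℝ × ℝ => Real.cos w.2.2) (X, Z, Θ) :=
          (Real.contDiff_cos.contDiffAt).comp (X, Z, Θ) ((contDiff_snd.comp contDiff_snd).contDiffAt)
        have hc2 : ContDiffAt ℝ 1 (fun w : ℝ × ℝ × ℝ => Real.sin w.2.2) (X, Z, Θ) :=
          (Real.contDiff_sin.contDiffAt).comp (X, Z, Θ) ((contDiff_snd.comp contDiff_snd).contDiffAt)
        have hc3 : ContDiffAt ℝ 1 (fun w : ℝ × ℝ × ℝ => φ' w.2.1) (X, Z, Θ) :=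
          hφ'cd.comp (X, Z, Θ) ((contDiff_fst.comp contDiff_snd).contDiffAt)
        have hc4 : ContDiffAt ℝ 1 (fun w : ℝ × ℝ × ℝ => w.1) (X, Z, Θ) :=
          contDiff_fst.contDiffAt
        exact hc1.prodMk (hc2.prodMk ((hc3.mul hc1).sub (hc2.div hc4 (ne_of_gt hXpos))))
      obtain ⟨α, hα0, ε, hε, hαode⟩ := hVcd.exists_forall_mem_closedBall_exists_eq_forall_mem_Ioo_hasDerivAt₀ b
      have hbIoo : b ∈ Ioo (b - ε) (b + ε) := ⟨by linarith, by linarith⟩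
      have hαX : (α b).1 = X := by rw [hα0]
      have hαZ : (α b).2.1 = Z := by rw [hα0]
      have hαΘ : (α b).2.2 = Θ := by rw [hα0]
      have hproj : ∀ t ∈ Ioo (b - ε) (b + ε),
          HasDerivAt (fun u => (α u).1) (Real.cos ((α t).2.2)) t ∧
          HasDerivAt (fun u => (α u).2.1) (Real.sin ((α t).2.2)) t ∧
          HasDerivAt (fun u => (α u).2.2)
            (φ' ((α t).2.1) * Real.cos ((α t).2.2) - Real.sin ((α t).2.2) / (α t).1) t := by
        intro t ht
        have h := hαode t ht
        refine ⟨?_, ?_, ?_⟩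
        · have h2 := (ContinuousLinearMap.fst ℝ ℝ (ℝ × ℝ)).hasFDerivAt.comp_hasDerivAt t h
          simp [hVdef] at h2; exact h2
        · have h2 := ((ContinuousLinearMap.fst ℝ ℝ ℝ).comp
            (ContinuousLinearMap.snd ℝ ℝ (ℝ × ℝ))).hasFDerivAt.comp_hasDerivAt t h
          simp [hVdef] at h2; exact h2
        · have h2 := ((ContinuousLinearMap.snd ℝ ℝ ℝ).comp
            (ContinuousLinearMap.snd ℝ ℝ (ℝ × ℝ))).hasFDerivAt.comp_hasDerivAt t h
          simp [hVdef] at h2; exact h2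
      have hαcont : ContinuousAt α b := (hαode b hbIoo).continuousAt
      have hαT : Tendsto α (𝓝 b) (𝓝 (X, Z, Θ)) := by rw [← hα0]; exact hαcont
      have he1 : Tendsto (fun t => (α t).1) (𝓝 b) (𝓝 X) :=
        (continuous_fst.tendsto _).comp hαT
      have he2 : Tendsto (fun t => (α t).2.1) (𝓝 b) (𝓝 Z) :=
        ((continuous_fst.comp continuous_snd).tendsto _).comp hαT
      have hU : ∀ᶠ t in 𝓝 b, 0 < (α t).1 ∧ a < ((α t).2.1 : EReal) := by
        have u1 : ∀ᶠ t in 𝓝 b, 0 < (α t).1 := he1.eventually_const_lt hXpos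
        have u2 : ∀ᶠ t in 𝓝 b, a < ((α t).2.1 : EReal) :=
          ((continuous_coe_real_ereal.tendsto Z).comp he2).eventually_const_lt hZgt
        exact u1.and u2
      obtain ⟨δ₀, hδ₀, hball⟩ := Metric.eventually_nhds_iff.mp hU
      set δ := min (ε/2) (δ₀/2) with hδdef
      have hδpos : 0 < δ := lt_min (by linarith) (by linarith)
      have hδε : δ ≤ ε/2 := min_le_left _ _
      have hδδ₀ : δ ≤ δ₀/2 := min_le_right _ _
      set b' := b + δ with hb'def
      have hbb' : b < b' := by rw [hb'def]; linarith
      have hb'pos : 0 < b' := by linarith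
      have hαpos : ∀ t, b ≤ t → t < b' → 0 < (α t).1 ∧ a < ((α t).2.1 : EReal) := by
        intro t h1 h2
        apply hball
        rw [Real.dist_eq, abs_of_nonneg (by linarith)]
        rw [hb'def] at h2
        linarith
      set xg : ℝ → ℝ := fun t => if t < b then x t else (α t).1 with hxgdef
      set zg : ℝ → ℝ := fun t => if t < b then z t else (α t).2.1 with hzgdef
      set θg : ℝ → ℝ := fun t => if t < b then θ t else (α t).2.2 with hθgdef
      set sm' : ℝ≥0∞ := ENNReal.ofReal b' with hsm'def
      have hsm'gt : sm < sm' := by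
        rw [hsm'def, ENNReal.lt_ofReal_iff_toReal_lt htop, ← hbdef]
        exact hbb'
      have hDom' : Dom sm' = Ico 0 b' := by
        ext t
        constructor
        · intro ht
          exact ⟨ht.1, (ENNReal.ofReal_lt_ofReal_iff hb'pos).mp ht.2⟩
        · intro ht
          exact ⟨ht.1, (ENNReal.ofReal_lt_ofReal_iff hb'pos).mpr ht.2⟩
      have hIooε : ∀ t, b ≤ t → t < b' → t ∈ Ioo (b - ε) (b + ε) := by
        intro t h1 h2
        rw [hb'def] at h2
        constructor
        · linarith
        · linarith
      -- glued values at b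
      have hxgb_val : xg b = X := by simp [hxgdef, hαX]
      have hzgb_val : zg b = Z := by simp [hzgdef, hαZ]
      have hθgb_val : θg b = Θ := by simp [hθgdef, hαΘ]
      have hEqx : ∀ t, t < b → xg t = x t := fun t ht => if_pos ht
      have hEqz : ∀ t, t < b → zg t = z t := fun t ht => if_pos ht
      have hEqθ : ∀ t, t < b → θg t = θ t := fun t ht => if_pos ht
      have hEqx' : ∀ t, b ≤ t → xg t = (α t).1 := fun t ht => if_neg (not_lt.mpr ht)
      have hEqz' : ∀ t, b ≤ t → zg t = (α t).2.1 := fun t ht => if_neg (not_lt.mpr ht)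
      have hEqθ' : ∀ t, b ≤ t → θg t = (α t).2.2 := fun t ht => if_neg (not_lt.mpr ht)
      have hgt0mem : ∀ t, 0 ≤ t → t < b → t ∈ Dom sm := by
        intro t h1 h2
        rw [hDom]
        exact ⟨h1, h2⟩
      -- left-sided glued derivatives at b
      have hlgx : HasDerivWithinAt xg (Real.cos Θ) (Iio b) b := by
        have h2 := left_glue hs'b (fun t ht => hxAt t (hIoodom t ht).1 (hIoodom t ht).2.2)
          hcoslim hxlim
        exact h2.congr (fun y hy => by simp [hxgdef, if_pos (mem_Iio.mp hy)])
          (by simp [hxgdef, hαX])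
      have hlgz : HasDerivWithinAt zg (Real.sin Θ) (Iio b) b := by
        have h2 := left_glue hs'b (fun t ht => hzAt t (hIoodom t ht).1 (hIoodom t ht).2.2)
          hsinlim hzlim
        exact h2.congr (fun y hy => by simp [hzgdef, if_pos (mem_Iio.mp hy)])
          (by simp [hzgdef, hαZ])
      have hlgθ : HasDerivWithinAt θg (φ' Z * Real.cos Θ - Real.sin Θ / X) (Iio b) b := by
        have h2 := left_glue hs'b (fun t ht => hθAt t (hIoodom t ht).1 (hIoodom t ht).2.2)
          hglim hθlim
        exact h2.congr (fun y hy => by simp [hθgdef, if_pos (mem_Iio.mp hy)])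
          (by simp [hθgdef, hαΘ])
      -- right-sided glued derivatives at b
      have hrgx : HasDerivWithinAt xg (Real.cos Θ) (Icc b b') b := by
        have h2 := ((hproj b hbIoo).1).hasDerivWithinAt (s := Icc b b')
        rw [hαΘ] at h2
        exact h2.congr (fun y hy => hEqx' y hy.1) (hEqx' b le_rfl)
      have hrgz : HasDerivWithinAt zg (Real.sin Θ) (Icc b b') b := by
        have h2 := ((hproj b hbIoo).2.1).hasDerivWithinAt (s := Icc b b')
        rw [hαΘ] at h2
        exact h2.congr (fun y hy => hEqz' y hy.1) (hEqz' b le_rfl)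
      have hrgθ : HasDerivWithinAt θg (φ' Z * Real.cos Θ - Real.sin Θ / X) (Icc b b') b := by
        have h2 := ((hproj b hbIoo).2.2).hasDerivWithinAt (s := Icc b b')
        rw [hαΘ, hαZ, hαX] at h2
        exact h2.congr (fun y hy => hEqθ' y hy.1) (hEqθ' b le_rfl)
      have hsplit : Dom sm' ⊆ Iio b ∪ Icc b b' := by
        rw [hDom']
        intro t ht
        rcases lt_or_ge t b with h | h
        · exact Or.inl h
        · exact Or.inr ⟨h, ht.2.le⟩
      have hDomNhd : Dom sm ∈ 𝓝[Dom sm'] 0 := by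
        have h5 : Dom sm' ∩ Iio b ∈ 𝓝[Dom sm'] 0 :=
          inter_mem self_mem_nhdsWithin (mem_nhdsWithin_of_mem_nhds (Iio_mem_nhds hbpos))
        refine Filter.mem_of_superset h5 ?_
        rw [hDom, hDom']
        rintro u ⟨hu1, hu2⟩
        exact ⟨hu1.1, hu2⟩
      -- all three derivative conditions for the glued functions
      have hdxg : ∀ s ∈ Dom sm', HasDerivWithinAt xg (Real.cos (θg s)) (Dom sm') s := by
        intro t ht
        rw [hDom'] at ht
        rcases eq_or_lt_of_le ht.1 with h0 | h0pos
        · have ht0 : t = 0 := h0.symm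
          subst ht0
          have h2 : HasDerivWithinAt x (Real.cos (θ 0)) (Dom sm) 0 :=
            hdx 0 (hgt0mem 0 le_rfl hbpos)
          have h3 : HasDerivWithinAt xg (Real.cos (θ 0)) (Dom sm) 0 :=
            h2.congr (fun y hy => hEqx y (by rw [hDom] at hy; exact hy.2)) (hEqx 0 hbpos)
          have h6 := h3.mono_of_mem_nhdsWithin hDomNhd
          rw [hEqθ 0 hbpos]
          exact h6
        rcases lt_trichotomy t b with hlt | heq | hgt
        · have h2 : HasDerivAt xg (Real.cos (θ t)) t :=
            (hxAt t h0pos (hgt0mem t h0pos.le hlt)).congr_of_eventuallyEq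
              (by filter_upwards [Iio_mem_nhds hlt] with u hu using hEqx u hu)
          rw [hEqθ t hlt]
          exact h2.hasDerivWithinAt
        · subst heq
          rw [hθgb_val]
          exact (hlgx.union hrgx).mono hsplit
        · have htI : t ∈ Ioo (b - ε) (b + ε) := hIooε t hgt.le ht.2
          have h2 : HasDerivAt xg (Real.cos ((α t).2.2)) t :=
            ((hproj t htI).1).congr_of_eventuallyEq
              (by filter_upwards [Ioi_mem_nhds hgt] with u hu using hEqx' u (le_of_lt hu))
          rw [hEqθ' t hgt.le]
          exact h2.hasDerivWithinAt
      have hdzg : ∀ s ∈ Dom sm', HasDerivWithinAt zg (Real.sin (θg s)) (Dom sm') s := by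
        intro t ht
        rw [hDom'] at ht
        rcases eq_or_lt_of_le ht.1 with h0 | h0pos
        · have ht0 : t = 0 := h0.symm
          subst ht0
          have h2 : HasDerivWithinAt z (Real.sin (θ 0)) (Dom sm) 0 :=
            hdz 0 (hgt0mem 0 le_rfl hbpos)
          have h3 : HasDerivWithinAt zg (Real.sin (θ 0)) (Dom sm) 0 :=
            h2.congr (fun y hy => hEqz y (by rw [hDom] at hy; exact hy.2)) (hEqz 0 hbpos)
          have h6 := h3.mono_of_mem_nhdsWithin hDomNhd
          rw [hEqθ 0 hbpos]
          exact h6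
        rcases lt_trichotomy t b with hlt | heq | hgt
        · have h2 : HasDerivAt zg (Real.sin (θ t)) t :=
            (hzAt t h0pos (hgt0mem t h0pos.le hlt)).congr_of_eventuallyEq
              (by filter_upwards [Iio_mem_nhds hlt] with u hu using hEqz u hu)
          rw [hEqθ t hlt]
          exact h2.hasDerivWithinAt
        · subst heq
          rw [hθgb_val]
          exact (hlgz.union hrgz).mono hsplit
        · have htI : t ∈ Ioo (b - ε) (b + ε) := hIooε t hgt.le ht.2
          have h2 : HasDerivAt zg (Real.sin ((α t).2.2)) t :=
            ((hproj t htI).2.1).congr_of_eventuallyEq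
              (by filter_upwards [Ioi_mem_nhds hgt] with u hu using hEqz' u (le_of_lt hu))
          rw [hEqθ' t hgt.le]
          exact h2.hasDerivWithinAt
      have hdθg : ∀ s ∈ Dom sm', HasDerivWithinAt θg
          (φ' (zg s) * Real.cos (θg s) - Real.sin (θg s) / xg s) (Dom sm') s := by
        intro t ht
        rw [hDom'] at ht
        rcases eq_or_lt_of_le ht.1 with h0 | h0pos
        · have ht0 : t = 0 := h0.symm
          subst ht0
          have h2 : HasDerivWithinAt θ
              (φ' (z 0) * Real.cos (θ 0) - Real.sin (θ 0) / x 0) (Dom sm) 0 :=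
            hdθ 0 (hgt0mem 0 le_rfl hbpos)
          have h3 : HasDerivWithinAt θg
              (φ' (z 0) * Real.cos (θ 0) - Real.sin (θ 0) / x 0) (Dom sm) 0 :=
            h2.congr (fun y hy => hEqθ y (by rw [hDom] at hy; exact hy.2)) (hEqθ 0 hbpos)
          have h6 := h3.mono_of_mem_nhdsWithin hDomNhd
          rw [hEqθ 0 hbpos, hEqz 0 hbpos, hEqx 0 hbpos]
          exact h6
        rcases lt_trichotomy t b with hlt | heq | hgt
        · have h2 : HasDerivAt θg
              (φ' (z t) * Real.cos (θ t) - Real.sin (θ t) / x t) t :=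
            (hθAt t h0pos (hgt0mem t h0pos.le hlt)).congr_of_eventuallyEq
              (by filter_upwards [Iio_mem_nhds hlt] with u hu using hEqθ u hu)
          rw [hEqθ t hlt, hEqz t hlt, hEqx t hlt]
          exact h2.hasDerivWithinAt
        · subst heq
          rw [hθgb_val, hzgb_val, hxgb_val]
          exact (hlgθ.union hrgθ).mono hsplit
        · have htI : t ∈ Ioo (b - ε) (b + ε) := hIooε t hgt.le ht.2
          have h2 : HasDerivAt θg
              (φ' ((α t).2.1) * Real.cos ((α t).2.2) - Real.sin ((α t).2.2) / (α t).1) t :=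
            ((hproj t htI).2.2).congr_of_eventuallyEq
              (by filter_upwards [Ioi_mem_nhds hgt] with u hu using hEqθ' u (le_of_lt hu))
          rw [hEqθ' t hgt.le, hEqz' t hgt.le, hEqx' t hgt.le]
          exact h2.hasDerivWithinAt
      -- positivity and membership conditions
      have hxgpos : ∀ s ∈ Dom sm', 0 < xg s := by
        intro t ht
        rw [hDom'] at ht
        rcases lt_or_ge t b with h | h
        · rw [hEqx t h]
          exact hxpos t (hgt0mem t ht.1 h)
        · rw [hEqx' t h]
          exact (hαpos t h ht.2).1
      have hzgmem : ∀ s ∈ Dom sm', a < (zg s : EReal) := by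
        intro t ht
        rw [hDom'] at ht
        rcases lt_or_ge t b with h | h
        · rw [hEqz t h]
          exact hzmem t (hgt0mem t ht.1 h)
        · rw [hEqz' t h]
          exact (hαpos t h ht.2).2
      have hxg0 : xg 0 = x₀ := by rw [hEqx 0 hbpos]; exact hx0
      have hzg0 : zg 0 = z₀ := by rw [hEqz 0 hbpos]; exact hz0
      have hθg0 : θg 0 = Real.pi := by rw [hEqθ 0 hbpos]; exact hθ0
      exact hmax sm' hsm'gt
        ⟨xg, zg, θg, hxg0, hzg0, hθg0, hxgpos, hzgmem, hdxg, hdzg, hdθg⟩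
  obtain ⟨hn1, hn2, hn3, hn4, hn5⟩ :=
    hInfFacts B s₀ hs₀dom (fun s hs => hs.1) (fun s hs => hs.2.1) hBne
  set s₁ := sInf B with hs₁def
  have hs₁gt : s₀ < s₁ := by
    rcases eq_or_lt_of_le hn1 with he | hlt
    · exfalso
      have hev : ∀ᶠ t in 𝓝 s₀, g t < 0 := (hgc s₀ hs₀pos hs₀dom).eventually_lt_const hgs₀
      have hev2 : ∀ᶠ t in 𝓝[>] s₀, g t < 0 := hev.filter_mono nhdsWithin_le_nhds
      obtain ⟨u, hu, hsub2⟩ := mem_nhdsGT_iff_exists_Ioo_subset.mp hev2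
      obtain ⟨t, htB, htu⟩ := exists_lt_of_csInf_lt hBne (he ▸ hu)
      exact absurd htB.2.2 (not_le.mpr (hsub2 ⟨htB.1, htu⟩))
    · exact hlt
  have hs₁0 : 0 < s₁ := lt_trans hs₀pos hs₁gt
  have hgcs₁ : ContinuousAt g s₁ := hgc s₁ hs₁0 hn2
  have hgs₁ : g s₁ = 0 := by
    have hge : 0 ≤ g s₁ := le_of_closure hgcs₁ hn3 (fun s hs => hs.2.2)
    have hcl2 : s₁ ∈ closure (Ioo s₀ s₁) := by
      rw [closure_Ioo (ne_of_lt hs₁gt)]; exact ⟨hs₁gt.le, le_rfl⟩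
    have hle : g s₁ ≤ 0 := by
      refine ge_of_closure hgcs₁ hcl2 ?_
      intro t ht
      by_contra hnot
      exact hn4 t ht.2 ⟨ht.1, hdomsub hn2 (lt_trans hs₀pos ht.1).le ht.2.le,
        (not_le.mp hnot).le⟩
    exact le_antisymm hle hge
  -- g > 0 strictly after s₁
  have gpos : ∀ s, s₁ < s → s ∈ Dom sm → 0 < g s := by
    by_contra hcon
    push_neg at hcon
    obtain ⟨w, hw1, hw2, hw3⟩ := hcon
    set C : Set ℝ := {s | s₁ < s ∧ s ∈ Dom sm ∧ g s ≤ 0} with hCdef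
    have hCne : C.Nonempty := ⟨w, hw1, hw2, hw3⟩
    obtain ⟨hq1, hq2, hq3, hq4, hq5⟩ :=
      hInfFacts C s₁ hn2 (fun s hs => hs.1) (fun s hs => hs.2.1) hCne
    set m := sInf C with hm2def
    have hm0 : 0 < m := lt_of_lt_of_le hs₁0 hq1
    rcases eq_or_lt_of_le hq1 with he | hlt
    · -- m = s₁ : g increases through 0 at s₁
      have hD := hDpos s₁ hs₁gt hn2 hgs₁
      have hev := ev_right_gt (hgAt s₁ hs₁0 hn2) hD
      obtain ⟨u, hu, hsub2⟩ := mem_nhdsGT_iff_exists_Ioo_subset.mp hev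
      obtain ⟨t, htC, htu⟩ := exists_lt_of_csInf_lt hCne (he ▸ hu)
      have := hsub2 ⟨htC.1, htu⟩
      rw [hgs₁] at this
      exact absurd htC.2.2 (not_le.mpr this)
    · have hgcm : ContinuousAt g m := hgc m hm0 hq2
      have hgm_le : g m ≤ 0 := ge_of_closure hgcm hq3 (fun s hs => hs.2.2)
      have hcl2 : m ∈ closure (Ioo s₁ m) := by
        rw [closure_Ioo (ne_of_lt hlt)]; exact ⟨hlt.le, le_rfl⟩
      have hgm_ge : 0 ≤ g m := by
        refine le_of_closure hgcm hcl2 ?_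
        intro t ht
        by_contra hnot
        exact hq4 t ht.2 ⟨ht.1, hdomsub hq2 (lt_trans hs₁0 ht.1).le ht.2.le,
          (not_le.mp hnot).le⟩
      have hgm : g m = 0 := le_antisymm hgm_le hgm_ge
      have hD := hDpos m (lt_trans hs₁gt hlt) hq2 hgm
      have hev := ev_left_lt (hgAt m hm0 hq2) hD
      obtain ⟨t, ht1, ht2⟩ :=
        (hev.and (Filter.eventually_of_mem (Ioo_mem_nhdsLT_of_mem (⟨hlt, le_rfl⟩ : m ∈ Ioc s₁ m)) (fun y hy => hy))).exists
      rw [hgm] at ht1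
      refine hq4 t ht2.2 ⟨ht2.1, hdomsub hq2 (lt_trans hs₁0 ht2.1).le ht2.2.le, ht1.le⟩
  -- θ attains its minimum at s₁
  have hmin : ∀ s, s₀ < s → s ∈ Dom sm → θ s₁ ≤ θ s := by
    intro s hs hsd
    rcases le_or_gt s s₁ with hle | hlt
    · have hanti : AntitoneOn θ (Icc s₀ s₁) := by
        have hmem : ∀ t ∈ Icc s₀ s₁, 0 < t ∧ t ∈ Dom sm := fun t ht =>
          ⟨lt_of_lt_of_le hs₀pos ht.1, hdomsub hn2 (hs₀pos.le.trans ht.1) ht.2⟩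
        apply antitoneOn_of_deriv_nonpos (convex_Icc _ _)
        · intro t ht
          exact ((hθAt t (hmem t ht).1 (hmem t ht).2).continuousAt).continuousWithinAt
        · intro t ht
          rw [interior_Icc] at ht
          have h' := hmem t (Ioo_subset_Icc_self ht)
          exact (hθAt t h'.1 h'.2).differentiableAt.differentiableWithinAt
        · intro t ht
          rw [interior_Icc] at ht
          have h' := hmem t (Ioo_subset_Icc_self ht)
          rw [(hθAt t h'.1 h'.2).deriv]
          by_contra hnot
          exact hn4 t ht.2 ⟨ht.1, h'.2, (not_le.mp hnot).le⟩
      exact hanti ⟨hs.le, hle⟩ ⟨hs₁gt.le, le_rfl⟩ hle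
    · have hmono : MonotoneOn θ (Icc s₁ s) := by
        have hmem : ∀ t ∈ Icc s₁ s, 0 < t ∧ t ∈ Dom sm := fun t ht =>
          ⟨lt_of_lt_of_le hs₁0 ht.1, hdomsub hsd (hs₁0.le.trans ht.1) ht.2⟩
        apply monotoneOn_of_deriv_nonneg (convex_Icc _ _)
        · intro t ht
          exact ((hθAt t (hmem t ht).1 (hmem t ht).2).continuousAt).continuousWithinAt
        · intro t ht
          rw [interior_Icc] at ht
          have h' := hmem t (Ioo_subset_Icc_self ht)
          exact (hθAt t h'.1 h'.2).differentiableAt.differentiableWithinAt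
        · intro t ht
          rw [interior_Icc] at ht
          have h' := hmem t (Ioo_subset_Icc_self ht)
          rw [(hθAt t h'.1 h'.2).deriv]
          exact (gpos t ht.1 h'.2).le
      exact hmono ⟨le_rfl, hlt.le⟩ ⟨hlt.le, le_rfl⟩ hlt.le
  refine ⟨fun s hs hsd => ⟨Pb s hs hsd, Pa s hs hsd⟩, s₁, hs₁gt, hn2, hgs₁, hmin,
    fun s hs hsd => gpos s hs hsd⟩
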